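/- Let (E, ℛ, τ) satisfy conditions (i), (ii), (iii). Then for every e ∈ E× and every nonempty finite subset 𝒮 ⊆ ℛ(e), the idempotent e(𝒮) = ∏_{R∈𝒮}(e − ⋁R) is nonzero in ℤ[E×]. -/

import Mathlib

set_option linter.unusedSectionVars false

/-- A *semilattice with zero*: a commutative idempotent semigroup with an
absorbing element `0`. -/
class SemilatticeWithZero (E : Type) extends CommSemigroup E, Zero E where
  mul_idem : ∀ e : E, e * e = e
  zero_mul : ∀ e : E, 0 * e = 0

namespace IndRes

variable {E : Type} [SemilatticeWithZero E]

/-- `single e c`, viewed in the semigroup algebra `ℤ[E]`. -/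
noncomputable def sgl (e : E) (c : ℤ) : MonoidAlgebra ℤ E := MonoidAlgebra.ofCoeff (Finsupp.single e c)

/-- Truncation map deleting the coefficient at `0`. -/
noncomputable def T (x : MonoidAlgebra ℤ E) : MonoidAlgebra ℤ E := x - sgl 0 (x.coeff 0)

lemma sgl_apply_self (e : E) (c : ℤ) : (sgl e c).coeff e = c := Finsupp.single_eq_same

lemma sgl_apply_ne (e d : E) (c : ℤ) (h : e ≠ d) : (sgl e c).coeff d = 0 := by
  simp [sgl, Finsupp.single_apply, h]

lemma sgl_add (e : E) (c d : ℤ) : sgl e (c + d) = sgl e c + sgl e d := by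
  unfold sgl; rw [Finsupp.single_add]; rfl

lemma sgl_sub (e : E) (c d : ℤ) : sgl e (c - d) = sgl e c - sgl e d := by
  unfold sgl; rw [Finsupp.single_sub]; rfl

lemma T_apply_zero (x : MonoidAlgebra ℤ E) : (T x).coeff 0 = 0 := by
  show ((x - sgl 0 (x.coeff 0) : MonoidAlgebra ℤ E)).coeff 0 = 0
  rw [MonoidAlgebra.coeff_sub, Finsupp.sub_apply, sgl_apply_self, sub_self]

/-- `ℤ[E^×]`, realized as the additive subgroup of the semigroup algebra
`ℤ[E]` consisting of the elements whose coefficient at `0` vanishes; it is the free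
`ℤ`-module with basis `E^× = E \ {0}`. -/
noncomputable def ZS (E : Type) [SemilatticeWithZero E] : AddSubgroup (MonoidAlgebra ℤ E) where
  carrier := {x | x.coeff 0 = 0}
  zero_mem' := rfl
  add_mem' := by
    intro a b ha hb
    simp only [Set.mem_setOf_eq] at *
    rw [MonoidAlgebra.coeff_add, Finsupp.add_apply, ha, hb, add_zero]
  neg_mem' := by
    intro a ha
    simp only [Set.mem_setOf_eq] at *
    rw [MonoidAlgebra.coeff_neg, Finsupp.neg_apply, ha, neg_zero]

/-- The integral semigroup ring `ℤ[E^×]`. -/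
abbrev ZE (E : Type) [SemilatticeWithZero E] : Type := ↥(ZS E)

lemma mem_ZS {x : MonoidAlgebra ℤ E} : x ∈ ZS E ↔ x.coeff 0 = 0 := Iff.rfl

lemma T_eq_self {x : MonoidAlgebra ℤ E} (h : x.coeff 0 = 0) : T x = x := by
  simp [T, h, sgl]

lemma T_add (a b : MonoidAlgebra ℤ E) : T (a + b) = T a + T b := by
  unfold T
  rw [show ((a + b).coeff 0) = a.coeff 0 + b.coeff 0 from Finsupp.add_apply a.coeff b.coeff 0, sgl_add]
  abel

lemma T_sub_sgl (x : MonoidAlgebra ℤ E) (m : ℤ) : T (x - sgl 0 m) = T x := by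
  unfold T
  have h : ((x - sgl 0 m : MonoidAlgebra ℤ E)).coeff 0 = x.coeff 0 - m := by
    rw [MonoidAlgebra.coeff_sub, Finsupp.sub_apply, sgl_apply_self]
  rw [h, sgl_sub]
  abel

lemma single_zero_mul (c : ℤ) (b : MonoidAlgebra ℤ E) :
    (sgl 0 c) * b = sgl 0 (((sgl 0 c * b : MonoidAlgebra ℤ E)).coeff 0) := by
  classical
  ext d
  by_cases hd : d = 0
  · subst hd; rw [sgl_apply_self]
  · rw [sgl_apply_ne 0 d _ (Ne.symm hd)]
    by_contra h
    have hmem : d ∈ ((sgl (0:E) c) * b).coeff.support := Finsupp.mem_support_iff.mpr h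
    have h2 := MonoidAlgebra.support_coeff_mul_subset (sgl (0:E) c) b hmem
    rw [Finset.mem_mul] at h2
    obtain ⟨a, ha, b', _, hab⟩ := h2
    have ha' : a = 0 := by
      have := Finsupp.support_single_subset (ha : a ∈ (Finsupp.single (0:E) c).support)
      simpa using this
    exact hd (by rw [← hab, ha', SemilatticeWithZero.zero_mul])

lemma T_mul_left (a b : MonoidAlgebra ℤ E) : T (T a * b) = T (a * b) := by
  have h1 : T a * b = a * b - (sgl 0 (a.coeff 0)) * b := by rw [T, sub_mul]
  rw [h1, single_zero_mul, T_sub_sgl]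

lemma T_mul_right (a b : MonoidAlgebra ℤ E) : T (a * T b) = T (a * b) := by
  rw [mul_comm a (T b), T_mul_left, mul_comm]

noncomputable instance : Mul (ZE E) :=
  ⟨fun x y => ⟨T (x.1 * y.1), T_apply_zero _⟩⟩

lemma ZE.val_mul (x y : ZE E) : (x * y).1 = T (x.1 * y.1) := rfl

noncomputable instance : NonUnitalCommRing (ZE E) :=
  { (inferInstance : AddCommGroup (ZE E)) with
    mul := (· * ·)
    left_distrib := by
      intro x y z
      apply Subtype.ext
      show T (x.1 * (y.1 + z.1)) = T (x.1 * y.1) + T (x.1 * z.1)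
      rw [mul_add, T_add]
    right_distrib := by
      intro x y z
      apply Subtype.ext
      show T ((x.1 + y.1) * z.1) = T (x.1 * z.1) + T (y.1 * z.1)
      rw [add_mul, T_add]
    zero_mul := by
      intro x
      apply Subtype.ext
      show T ((0 : MonoidAlgebra ℤ E) * x.1) = 0
      rw [zero_mul]
      simp [T, sgl]
    mul_zero := by
      intro x
      apply Subtype.ext
      show T (x.1 * (0 : MonoidAlgebra ℤ E)) = 0
      rw [mul_zero]
      simp [T, sgl]
    mul_assoc := by
      intro x y z
      apply Subtype.ext
      show T (T (x.1 * y.1) * z.1) = T (x.1 * T (y.1 * z.1))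
      rw [T_mul_left, T_mul_right, mul_assoc]
    mul_comm := by
      intro x y
      apply Subtype.ext
      show T (x.1 * y.1) = T (y.1 * x.1)
      rw [mul_comm] }

/-- The canonical image of `e ∈ E` in `ℤ[E^×]`: the basis element `e` if `e ≠ 0`,
and `0` if `e = 0`. -/
noncomputable def elt (e : E) : ZE E := ⟨T (sgl e 1), T_apply_zero _⟩

/-- Product of a (nonempty) finite family in a commutative non-unital ring, computed inside
the unitization.  For a nonempty index set this is the iterated product. -/
noncomputable def nprod {ι A : Type} [NonUnitalCommRing A] (s : Finset ι) (f : ι → A) : A :=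
  (∏ j ∈ s, (Unitization.inr (f j) : Unitization ℤ A)).snd

/-- The join `⋁_{j ∈ J} x_j = ∑_{∅ ≠ J' ⊆ J} (-1)^{|J'|+1} ∏_{j ∈ J'} x_j`
of a finite family of idempotents of a commutative non-unital ring. -/
noncomputable def rjoin {ι A : Type} [NonUnitalCommRing A] (s : Finset ι) (f : ι → A) : A :=
  ∑ t ∈ s.powerset.filter (fun t => t.Nonempty), ((-1 : ℤ) ^ (t.card + 1)) • nprod t f

/-- The join `⋁_{j ∈ J} e_j ∈ ℤ[E^×]` of a finite family of elements of `E`: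
`∑_{∅ ≠ J' ⊆ J} (-1)^{|J'|+1} ∏_{j ∈ J'} e_j`, where a product whose value in `E`
is `0` contributes `0`. -/
noncomputable def join {ι : Type} (s : Finset ι) (e : ι → E) : ZE E :=
  rjoin s (fun j => elt (e j))

/-- Iterated product of a nonempty list in a semigroup with zero (the value on the
empty list is the junk value `0`). -/
def listProd : List E → E
  | [] => 0
  | [a] => a
  | a :: b :: l => a * listProd (b :: l)

/-- The product `∏_{j ∈ s} f j ∈ E` of a (nonempty) finite family. -/
noncomputable def eprod {ι : Type} (s : Finset ι) (f : ι → E) : E :=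
  listProd (s.toList.map f)

/-- The support `E(x)` of `x ∈ ℤ[E^×]`: the finite set of elements of `E^×` appearing
with a nonzero coefficient in the reduced form of `x`. -/
noncomputable def supp (x : ZE E) : Finset E := x.1.coeff.support

section Action

variable {Γ : Type} [Group Γ] [MulAction Γ E]

/-- The induced action of `g ∈ Γ` on `ℤ[E^×]`: the `ℤ`-linear map sending a basis
element `e ∈ E^×` to `g • e`.  (When the action fixes `0` — which is the case for an
action by semigroup automorphisms fixing `0` — the truncation `T` is a no-op, and this
is the automorphism of `ℤ[E^×]` induced by `τ_g`.) -/
noncomputable def act (g : Γ) (x : ZE E) : ZE E :=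
  ⟨T (MonoidAlgebra.ofCoeff (Finsupp.mapDomain (fun e : E => g • e) x.1.coeff)), T_apply_zero _⟩

end Action



attribute [local instance] Classical.propDecidable

variable {E : Type} [SemilatticeWithZero E]

/-- A Γ-semilattice structure: the group acts by semigroup automorphisms fixing `0`. -/
def IsGammaSL (Γ E : Type) [Group Γ] [SemilatticeWithZero E] [MulAction Γ E] : Prop :=
  (∀ (g : Γ) (x y : E), g • (x * y) = (g • x) * (g • y)) ∧ (∀ g : Γ, g • (0 : E) = 0)

/-- The set `E_φ`. -/
def Ephi {D : Type} [NonUnitalCommRing D] (φ : ZE E →ₙ+* D) : Set (ZE E) :=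
  { x | ∃ (e : E) (J : Finset E), e ≠ 0 ∧ (∀ f ∈ J, f ≠ 0 ∧ f * e = f ∧ f ≠ e) ∧
      x = elt e - join J (fun f => f) ∧
      φ (elt e) = rjoin J (fun f => φ (elt f)) }

/-- `R` is a finite cover for `e ∈ E^×`. -/
def IsCover (e : E) (R : Finset E) : Prop :=
  (∀ f ∈ R, f ≠ 0 ∧ f * e = f) ∧
  ∀ f' : E, f' ≠ 0 → f' * e = f' → ∃ f ∈ R, f' * f ≠ 0

/-- `ℛ` is a collection of finite covers for `E`. -/
def CovSystem (ℛ : E → Set (Finset E)) : Prop :=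
  ∀ e : E, e ≠ 0 → ∀ R ∈ ℛ e, IsCover e R

/-- Condition (i). -/
def CondI (ℛ : E → Set (Finset E)) : Prop :=
  ∀ d e : E, d ≠ 0 → e ≠ 0 → d * e ≠ 0 → ∀ R ∈ ℛ e,
    d * e ∈ (R.image (fun f => d * f)).erase 0 ∨ (R.image (fun f => d * f)).erase 0 ∈ ℛ (d * e)

/-- Condition (ii). -/
def CondII (ℛ : E → Set (Finset E)) : Prop :=
  ∀ e : E, e ≠ 0 → ∀ r : ℕ, 0 < r → ∀ Rs : Fin r → Finset E,
    Function.Injective Rs → (∀ i, Rs i ∈ ℛ e) → ∀ ε : Fin r → E,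
    (∀ i, ε i ∈ supp (join (Rs i) (fun f => f))) → ∀ j : Fin r,
      (if r = 1 then e else eprod (Finset.univ.erase j) ε) ≠ 0 →
      eprod Finset.univ ε * (if r = 1 then e else eprod (Finset.univ.erase j) ε)
          = eprod Finset.univ ε ∧
      eprod Finset.univ ε ≠ (if r = 1 then e else eprod (Finset.univ.erase j) ε)

/-- Condition (iii). -/
def CondIII (Γ : Type) [Group Γ] [MulAction Γ E] (ℛ : E → Set (Finset E)) : Prop :=
  ∀ (g : Γ) (e : E), e ≠ 0 →
    (fun R : Finset E => R.image (fun f => g • f)) '' (ℛ e) = ℛ (g • e)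

/-- `e(𝒮) = ∏_{R ∈ 𝒮} (e - ⋁R) ∈ ℤ[E^×]`. -/
noncomputable def eS (e : E) (S : Finset (Finset E)) : ZE E :=
  nprod S (fun R => elt e - join R (fun f => f))

/-- `E(E,ℛ) = {e(𝒮) : e ∈ E^×, 𝒮 ⊆ ℛ(e) nonempty finite} ∪ {0} ⊆ ℤ[E^×]`. -/
def EER (ℛ : E → Set (Finset E)) : Set (ZE E) :=
  {x | ∃ (e : E) (S : Finset (Finset E)), e ≠ 0 ∧ S.Nonempty ∧ ↑S ⊆ ℛ e ∧ x = eS e S} ∪ {0}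

/-- `R(𝒮,R̃) = {e(𝒮 ∪ {R̃})} ∪ {f ⬝ e(𝒮) : f ∈ R̃, f ⬝ e(𝒮) ≠ 0}`. -/
noncomputable def RSR (e : E) (S : Finset (Finset E)) (Rt : Finset E) : Finset (ZE E) :=
  insert (eS e (insert Rt S)) ((Rt.image (fun f => elt f * eS e S)).erase 0)

/-- The collection of finite covers `ℛ(E,ℛ)` on `E(E,ℛ)`, assigning to an element
`x = e(𝒮)` of `E(E,ℛ)^×` the covers `R(𝒮,R̃)`, `R̃ ∈ ℛ(e) ∖ 𝒮` (over all ways of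
presenting `x` in the form `e(𝒮)`). -/
def RER (ℛ : E → Set (Finset E)) (x : ZE E) : Set (Finset (ZE E)) :=
  {C | ∃ (e : E) (S : Finset (Finset E)) (Rt : Finset E),
        e ≠ 0 ∧ S.Nonempty ∧ ↑S ⊆ ℛ e ∧ Rt ∈ ℛ e ∧ Rt ∉ S ∧ x = eS e S ∧ C = RSR e S Rt}

/-- The `ℤ`-linear map `ℤ[E₁^×] → ℤ[E₂^×]` induced by a map `θ` from `E₁` to `ℤ[E₂^×]`,
sending a basis element `e' ∈ E₁^×` to `θ e'`. -/
noncomputable def indMap {E₁ E₂ : Type} [SemilatticeWithZero E₁] [SemilatticeWithZero E₂]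
    (θ : E₁ → ZE E₂) : ZE E₁ →ₗ[ℤ] ZE E₂ :=
  (Finsupp.linearCombination ℤ θ).comp ((MonoidAlgebra.coeffAddEquiv.toAddMonoidHom.comp (ZS E₁).subtype).toIntLinearMap)

/-- `(E₁, ℛ₁, θ)` is a realization of the construction `(E(E,ℛ), ℛ(E,ℛ))`:
`θ` identifies the abstract Γ-semilattice `E₁` with `E(E,ℛ) ⊆ ℤ[E^×]` (equivariantly,
multiplicatively and preserving `0`), and `ℛ₁` corresponds to `ℛ(E,ℛ)` under this
identification. -/
def Realizes {Γ E E₁ : Type} [Group Γ] [SemilatticeWithZero E] [MulAction Γ E]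
    [SemilatticeWithZero E₁] [MulAction Γ E₁]
    (ℛ : E → Set (Finset E)) (ℛ₁ : E₁ → Set (Finset E₁)) (θ : E₁ → ZE E) : Prop :=
  Function.Injective θ ∧ Set.range θ = EER ℛ ∧ θ 0 = 0 ∧
  (∀ x y : E₁, θ (x * y) = θ x * θ y) ∧
  (∀ (g : Γ) (x : E₁), θ (g • x) = act g (θ x)) ∧
  (∀ e' : E₁, e' ≠ 0 → ∀ C : Finset E₁, C ∈ ℛ₁ e' ↔ C.image θ ∈ RER ℛ (θ e'))

end IndRes

open IndRes

section MyAux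

attribute [local instance] Classical.propDecidable

variable {E : Type} [SemilatticeWithZero E]

lemma my_val_mul_apply (x y : ZE E) {f : E} (hf : f ≠ 0) :
    (x * y).1.coeff f = (x.1 * y.1).coeff f := by
  rw [ZE.val_mul]
  unfold T
  rw [MonoidAlgebra.coeff_sub, Finsupp.sub_apply, sgl_apply_ne 0 f _ (Ne.symm hf), sub_zero]

lemma my_le_of_mul_eq (e a b : E) (hae : a * e = a) (hab : a * b = e) : a = e := by
  have h1 : e * a = e := by
    calc e * a = (a * b) * a := by rw [hab]
    _ = (a * a) * b := by rw [mul_assoc, mul_comm b a, ← mul_assoc]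
    _ = a * b := by rw [SemilatticeWithZero.mul_idem]
    _ = e := hab
  calc a = a * e := hae.symm
  _ = e * a := mul_comm a e
  _ = e := h1

lemma my_coeff_mul (e : E) (he : e ≠ 0) (x y : ZE E)
    (hx : ∀ f ∈ supp x, f * e = f) (hy : ∀ f ∈ supp y, f * e = f) :
    (x * y).1.coeff e = x.1.coeff e * y.1.coeff e := by
  rw [my_val_mul_apply x y he, MonoidAlgebra.coeff_mul, Finsupp.sum]
  have inner : ∀ a ∈ x.1.coeff.support,
      (y.1.coeff.sum fun b c => if a * b = e then x.1.coeff a * c else 0)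
        = if a = e then x.1.coeff a * y.1.coeff e else 0 := by
    intro a ha
    rw [Finsupp.sum]
    by_cases h : a = e
    · rw [if_pos h, h]
      have hcongr : ∀ b ∈ y.1.coeff.support,
          (if e * b = e then x.1.coeff e * y.1.coeff b else 0)
            = if b = e then x.1.coeff e * y.1.coeff b else 0 := by
        intro b hb
        by_cases hb' : b = e
        · rw [if_pos hb', hb', if_pos (SemilatticeWithZero.mul_idem e)]
        · rw [if_neg hb', if_neg]
          intro hab
          exact hb' (my_le_of_mul_eq e b e (hy b hb) (by rw [mul_comm]; exact hab))
      rw [Finset.sum_congr rfl hcongr, Finset.sum_ite_eq' y.1.coeff.support e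
        (fun b => x.1.coeff e * y.1.coeff b)]
      by_cases hm : e ∈ y.1.coeff.support
      · rw [if_pos hm]
      · rw [if_neg hm, Finsupp.notMem_support_iff.mp hm, mul_zero]
    · rw [if_neg h]
      apply Finset.sum_eq_zero
      intro b hb
      rw [if_neg]
      intro hab
      exact h (my_le_of_mul_eq e a b (hx a ha) hab)
  rw [Finset.sum_congr rfl inner, Finset.sum_ite_eq' x.1.coeff.support e
    (fun a => x.1.coeff a * y.1.coeff e)]
  by_cases hm : e ∈ x.1.coeff.support
  · rw [if_pos hm]
  · rw [if_neg hm, Finsupp.notMem_support_iff.mp hm, zero_mul]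

lemma my_supp_mul (e : E) (x y : ZE E)
    (hx : ∀ f ∈ supp x, f * e = f) (hy : ∀ f ∈ supp y, f * e = f) :
    ∀ f ∈ supp (x * y), f * e = f := by
  intro f hf
  have hf0 : f ≠ 0 := by
    intro h
    exact Finsupp.mem_support_iff.mp hf (h ▸ (x * y).2)
  have hmem : f ∈ (x.1 * y.1).coeff.support := by
    apply Finsupp.mem_support_iff.mpr
    have hne : (x * y).1.coeff f ≠ 0 := Finsupp.mem_support_iff.mp hf
    rwa [my_val_mul_apply x y hf0] at hne
  have h2 := MonoidAlgebra.support_coeff_mul_subset x.1 y.1 hmem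
  rw [Finset.mem_mul] at h2
  obtain ⟨a, ha, b, hb, hab⟩ := h2
  have hae : a * e = a := hx a ha
  have hbe : b * e = b := hy b hb
  rw [← hab, mul_assoc, hbe]

lemma my_eprod_univ_fin_one (f : Fin 1 → E) :
    eprod (Finset.univ : Finset (Fin 1)) f = f 0 := by
  have h : (Finset.univ : Finset (Fin 1)) = {0} := rfl
  rw [h]
  show listProd (Finset.toList {0} |>.map f) = f 0
  rw [Finset.toList_singleton]
  rfl

lemma my_cover_supp {ℛ : E → Set (Finset E)} (h2 : CondII ℛ) {e : E} (he : e ≠ 0)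
    {R : Finset E} (hR : R ∈ ℛ e) :
    ∀ ε₀ ∈ supp (join R (fun f => f)), ε₀ * e = ε₀ ∧ ε₀ ≠ e := by
  intro ε₀ hm
  have key := h2 e he 1 one_pos (fun _ => R)
      (Function.injective_of_subsingleton _) (fun _ => hR) (fun _ => ε₀)
      (fun _ => hm) 0 (by simpa using he)
  simp only [reduceIte] at key
  rwa [my_eprod_univ_fin_one] at key

lemma my_elt_val {e : E} (he : e ≠ 0) : (elt e).1 = sgl e 1 :=
  T_eq_self (sgl_apply_ne e 0 1 he)

lemma my_factor (ℛ : E → Set (Finset E)) (h2 : CondII ℛ) {e : E} (he : e ≠ 0)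
    {R : Finset E} (hR : R ∈ ℛ e) :
    (elt e - join R (fun f => f)).1.coeff e = 1 ∧
    ∀ f ∈ supp (elt e - join R (fun f => f)), f * e = f := by
  have hjc : (join R (fun f => f)).1.coeff e = 0 := by
    by_contra h
    exact (my_cover_supp h2 he hR e (Finsupp.mem_support_iff.mpr h)).2 rfl
  have hval : (elt e - join R (fun f => f)).1 = (elt e).1 - (join R (fun f => f)).1 := rfl
  constructor
  · rw [hval, MonoidAlgebra.coeff_sub, Finsupp.sub_apply, my_elt_val he, sgl_apply_self, hjc, sub_zero]
  · intro f hf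
    have : f ∈ (elt e).1.coeff.support ∪ (join R (fun f => f)).1.coeff.support := by
      apply Finsupp.support_sub
      rw [supp, hval, MonoidAlgebra.coeff_sub] at hf
      exact hf
    rcases Finset.mem_union.mp this with h | h
    · rw [my_elt_val he, sgl, MonoidAlgebra.coeff_ofCoeff] at h
      have : f = e := by
        have := Finsupp.support_single_subset h
        simpa using this
      rw [this]
      exact SemilatticeWithZero.mul_idem e
    · exact (my_cover_supp h2 he hR f h).1

lemma my_fst_prod {ι A : Type} [NonUnitalCommRing A] {s : Finset ι} (hs : s.Nonempty)
    (f : ι → A) : (∏ j ∈ s, (Unitization.inr (f j) : Unitization ℤ A)).fst = 0 := by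
  induction hs using Finset.Nonempty.cons_induction with
  | singleton a => simp
  | cons a s ha hs ih =>
      rw [Finset.prod_cons, Unitization.fst_mul, Unitization.fst_inr, zero_mul]

lemma my_nprod_singleton {ι A : Type} [NonUnitalCommRing A] (a : ι) (f : ι → A) :
    nprod {a} f = f a := by
  simp [nprod]

lemma my_nprod_cons {ι A : Type} [NonUnitalCommRing A] (a : ι) {s : Finset ι}
    (h : a ∉ s) (hs : s.Nonempty) (f : ι → A) :
    nprod (Finset.cons a s h) f = f a * nprod s f := by
  unfold nprod
  rw [Finset.prod_cons, Unitization.snd_mul, Unitization.fst_inr, Unitization.snd_inr,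
    my_fst_prod hs f, zero_smul, zero_smul, zero_add, zero_add]

end MyAux

theorem statement_8 {E Γ : Type} [SemilatticeWithZero E] [Group Γ] [MulAction Γ E]
    (hact : IsGammaSL Γ E) (ℛ : E → Set (Finset E))
    (hcov : CovSystem ℛ) (h1 : CondI ℛ) (h2 : CondII ℛ) (h3 : CondIII Γ ℛ) :
    ∀ e : E, e ≠ 0 → ∀ S : Finset (Finset E), S.Nonempty → ↑S ⊆ ℛ e → eS e S ≠ 0 := by
  intro e he S hS hsub
  have main : ∀ S : Finset (Finset E), (hne : S.Nonempty) → ↑S ⊆ ℛ e →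
      (eS e S).1.coeff e = 1 ∧ ∀ f ∈ supp (eS e S), f * e = f := by
    intro S hne
    induction hne using Finset.Nonempty.cons_induction with
    | singleton R =>
        intro hsub
        have hR : R ∈ ℛ e := hsub (by simp)
        have heq : eS e {R} = elt e - join R (fun f => f) :=
          my_nprod_singleton R _
        rw [heq]
        exact my_factor ℛ h2 he hR
    | cons R S' hRn hS' ih =>
        intro hsub
        have hR : R ∈ ℛ e := hsub (by simp)
        have hS'sub : ↑S' ⊆ ℛ e := by
          intro x hx
          exact hsub (by simp [Finset.mem_coe.mp hx])
        have ih' := ih hS'sub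
        have heq : eS e (Finset.cons R S' hRn)
            = (elt e - join R (fun f => f)) * eS e S' :=
          my_nprod_cons R hRn hS' _
        have hfac := my_factor ℛ h2 he hR
        rw [heq]
        constructor
        · rw [my_coeff_mul e he _ _ hfac.2 ih'.2, hfac.1, ih'.1, one_mul]
        · exact my_supp_mul e _ _ hfac.2 ih'.2
  intro h0
  have h1 := (main S hS hsub).1
  rw [h0] at h1
  simp at h1
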